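/- For every dyadic interval I in the real line, the L^2-normalized Haar function h_I can be written as h_I = α_I h_I^v + β_I 𝟙_I/√|I|, where h_I^v is the weighted Haar function associated to the weight v, and the coefficients satisfy |α_I| ≤ √(m_I v) and |β_I| ≤ |Δ_I v| / m_I v, where Δ_I v = m_{I_+} v − m_{I_−} v. -/

import Mathlib

open MeasureTheory Set

noncomputable section

/-- A dyadic interval, indexed by scale `n` and position `k`,
representing `[k·2⁻ⁿ, (k+1)·2⁻ⁿ)`. -/
abbrev DI : Type := ℤ × ℤ

/-- The underlying set of a dyadic interval. -/
def dSet (I : DI) : Set ℝ :=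
  Set.Ico ((I.2 : ℝ) * (2:ℝ) ^ (-I.1)) (((I.2 : ℝ) + 1) * (2:ℝ) ^ (-I.1))

/-- The length `|I|` of a dyadic interval. -/
def dLen (I : DI) : ℝ := (2:ℝ) ^ (-I.1)

/-- The left child `I₋`. -/
def dLeft (I : DI) : DI := (I.1 + 1, 2 * I.2)

/-- The right child `I₊`. -/
def dRight (I : DI) : DI := (I.1 + 1, 2 * I.2 + 1)

/-- The dyadic parent `Î`. -/
def dParent (I : DI) : DI := (I.1 - 1, I.2 / 2)

/-- `I` is a dyadic subinterval of `J`. -/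
def dSub (I J : DI) : Prop := J.1 ≤ I.1 ∧ dSet I ⊆ dSet J

/-- The average `m_I f` of `f` over `I` (w.r.t. Lebesgue measure). -/
def avg (I : DI) (f : ℝ → ℝ) : ℝ := (dLen I)⁻¹ * ∫ x in dSet I, f x

/-- `v(I) = ∫_I v`. -/
def wMass (v : ℝ → ℝ) (I : DI) : ℝ := ∫ x in dSet I, v x

/-- The L²-normalized Haar function `h_I`. -/
def haar (I : DI) : ℝ → ℝ := fun x =>
  (Real.sqrt (dLen I))⁻¹ *
    ((dSet (dRight I)).indicator (fun _ => (1:ℝ)) x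
      - (dSet (dLeft I)).indicator (fun _ => (1:ℝ)) x)

/-- The Haar coefficient `⟨b, h_I⟩`. -/
def hInner (b : ℝ → ℝ) (I : DI) : ℝ := ∫ x, b x * haar I x

/-- `Δ_I v = m_{I₊} v − m_{I₋} v`. -/
def deltaAvg (v : ℝ → ℝ) (I : DI) : ℝ := avg (dRight I) v - avg (dLeft I) v

/-- A weight: a locally integrable, a.e. positive function on `ℝ`. -/
def IsWeight (v : ℝ → ℝ) : Prop :=
  MeasureTheory.LocallyIntegrable v MeasureTheory.volume ∧
    ∀ᵐ x ∂(MeasureTheory.volume : MeasureTheory.Measure ℝ), 0 < v x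

/-- The reciprocal `u⁻¹` of a function. -/
def inv' (u : ℝ → ℝ) : ℝ → ℝ := fun x => (u x)⁻¹

/-- `{lam I}` is a `v`-Carleson sequence with intensity `C`
(finite-sum formulation, equivalent for nonnegative sequences). -/
def IsCarleson (v : ℝ → ℝ) (lam : DI → ℝ) (C : ℝ) : Prop :=
  ∀ J : DI, ∀ F : Finset DI, (∀ I ∈ F, dSub I J) → ∑ I ∈ F, lam I ≤ C * wMass v J

/-- The `L²(v)` norm. -/
def L2norm (v f : ℝ → ℝ) : ℝ := Real.sqrt (∫ x, (f x)^2 * v x)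

/-- The pair `(u,v)` satisfies the joint dyadic `𝒜₂` condition with constant `Q`. -/
def JointA2 (u v : ℝ → ℝ) (Q : ℝ) : Prop :=
  ∀ I : DI, avg I (inv' u) * avg I v ≤ Q

/-- `v` is in the dyadic `RH₁` class with constant `R`. -/
def RH1 (v : ℝ → ℝ) (R : ℝ) : Prop :=
  ∀ I : DI, avg I (fun x => (v x / avg I v) * Real.log (v x / avg I v)) ≤ R

/-- The weighted Haar function `h_I^v`. -/
def whaar (v : ℝ → ℝ) (I : DI) : ℝ → ℝ := fun x =>
  (Real.sqrt (wMass v I))⁻¹ *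
    (Real.sqrt (wMass v (dLeft I) / wMass v (dRight I)) *
        (dSet (dRight I)).indicator (fun _ => (1:ℝ)) x
      - Real.sqrt (wMass v (dRight I) / wMass v (dLeft I)) *
        (dSet (dLeft I)).indicator (fun _ => (1:ℝ)) x)

-- auxiliary lemmas

lemma dLen_pos (I : DI) : 0 < dLen I := by
  unfold dLen; positivity

lemma halfLen (I : DI) : (2:ℝ) ^ (-(I.1+1)) = (2:ℝ) ^ (-I.1) / 2 := by
  rw [neg_add, zpow_add₀ (two_ne_zero), zpow_neg_one]
  ring

lemma dSet_split (I : DI) : dSet I = dSet (dLeft I) ∪ dSet (dRight I) := by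
  unfold dSet dLeft dRight
  simp only
  push_cast
  rw [halfLen I]
  have hp : (0:ℝ) < (2:ℝ) ^ (-I.1) := by positivity
  rw [Set.Ico_union_Ico_eq_Ico (by nlinarith) (by nlinarith)]
  ring_nf

lemma dSet_disj (I : DI) : Disjoint (dSet (dLeft I)) (dSet (dRight I)) := by
  unfold dSet dLeft dRight
  simp only
  push_cast
  exact Set.Ico_disjoint_Ico_same

lemma wInt {v : ℝ → ℝ} (hv : IsWeight v) (J : DI) : IntegrableOn v (dSet J) := by
  exact (hv.1.integrableOn_isCompact isCompact_Icc).mono_set Set.Ico_subset_Icc_self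

lemma wpos {v : ℝ → ℝ} (hv : IsWeight v) (J : DI) : 0 < wMass v J := by
  have hpos : 0 < (volume : Measure ℝ) (dSet J) := by
    rw [dSet, Real.volume_Ico]
    have : (0:ℝ) < ((J.2:ℝ) + 1) * 2 ^ (-J.1) - (J.2:ℝ) * 2 ^ (-J.1) := by
      have : (0:ℝ) < (2:ℝ) ^ (-J.1) := by positivity
      nlinarith
    simpa using ENNReal.ofReal_pos.2 this
  have hnn : 0 ≤ᵐ[volume.restrict (dSet J)] v :=
    (ae_restrict_of_ae (hv.2.mono fun x hx => hx.le))
  rw [wMass, setIntegral_pos_iff_support_of_nonneg_ae hnn (wInt hv J)]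
  have hnull : (volume : Measure ℝ) {x | ¬ 0 < v x} = 0 := hv.2
  have h0 : (volume : Measure ℝ) (dSet J \ Function.support v) = 0 := by
    apply measure_mono_null (fun x hx => ?_) hnull
    intro hlt
    exact hx.2 (ne_of_gt hlt)
  have : (volume : Measure ℝ) (dSet J) ≤
      volume (Function.support v ∩ dSet J) + volume (dSet J \ Function.support v) := by
    apply le_trans (measure_mono (fun x hx => ?_)) (measure_union_le _ _)
    by_cases h : x ∈ Function.support v
    · exact Or.inl ⟨h, hx⟩
    · exact Or.inr ⟨hx, h⟩
  rw [h0, add_zero] at this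
  exact lt_of_lt_of_le hpos this

lemma wMass_split {v : ℝ → ℝ} (hv : IsWeight v) (I : DI) :
    wMass v I = wMass v (dLeft I) + wMass v (dRight I) := by
  unfold wMass
  rw [dSet_split I]
  exact setIntegral_union (dSet_disj I) measurableSet_Ico (wInt hv _) (wInt hv _)


/-- For every dyadic interval `I`, `h_I = α_I h_I^v + β_I 𝟙_I/√|I|` with
`|α_I| ≤ √(m_I v)` and `|β_I| ≤ |Δ_I v| / m_I v`. -/
theorem stmt0 (v : ℝ → ℝ) (hv : IsWeight v) (I : DI) :
    ∃ α β : ℝ,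
      (∀ x : ℝ, haar I x =
        α * whaar v I x + β * (dSet I).indicator (fun _ => (1:ℝ)) x / Real.sqrt (dLen I)) ∧
      |α| ≤ Real.sqrt (avg I v) ∧ |β| ≤ |deltaAvg v I| / avg I v := by
  set a := wMass v (dLeft I) with ha_def
  set b := wMass v (dRight I) with hb_def
  have ha : 0 < a := wpos hv _
  have hb : 0 < b := wpos hv _
  have hL : 0 < dLen I := dLen_pos I
  have hsum : wMass v I = a + b := wMass_split hv I
  set sa := Real.sqrt a with hsa_def
  set sb := Real.sqrt b with hsb_def
  set sL := Real.sqrt (dLen I) with hsL_def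
  set s := Real.sqrt (a + b) with hs_def
  have hsa : 0 < sa := Real.sqrt_pos.2 ha
  have hsb : 0 < sb := Real.sqrt_pos.2 hb
  have hsL : 0 < sL := Real.sqrt_pos.2 hL
  have hspos : 0 < s := Real.sqrt_pos.2 (by linarith)
  have hsa2 : sa ^ 2 = a := Real.sq_sqrt ha.le
  have hsb2 : sb ^ 2 = b := Real.sq_sqrt hb.le
  have hssq : s ^ 2 = a + b := Real.sq_sqrt (by linarith)
  refine ⟨2 * (sa * sb) / (s * sL), (b - a) / (a + b), ?_, ?_, ?_⟩
  · intro x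
    have hdiv1 : Real.sqrt (a / b) = sa / sb := Real.sqrt_div ha.le b
    have hdiv2 : Real.sqrt (b / a) = sb / sa := Real.sqrt_div hb.le a
    have hxmem : x ∈ dSet I ↔ (x ∈ dSet (dLeft I) ∨ x ∈ dSet (dRight I)) := by
      rw [dSet_split I]; exact Set.mem_union _ _ _
    unfold haar whaar
    rw [hsum, hdiv1, hdiv2, ← hsL_def, ← hs_def]
    by_cases hR : x ∈ dSet (dRight I)
    · have hLft : x ∉ dSet (dLeft I) := fun h => (dSet_disj I).ne_of_mem h hR rfl
      have hI : x ∈ dSet I := hxmem.2 (Or.inr hR)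
      rw [Set.indicator_of_mem hR, Set.indicator_of_mem hI, Set.indicator_of_notMem hLft]
      field_simp
      linear_combination (2*a) * hssq + (-2*(a+b)) * hsa2
    · by_cases hLft : x ∈ dSet (dLeft I)
      · have hI : x ∈ dSet I := hxmem.2 (Or.inl hLft)
        rw [Set.indicator_of_mem hLft, Set.indicator_of_mem hI, Set.indicator_of_notMem hR]
        field_simp
        linear_combination (-2*b) * hssq + (2*(a+b)) * hsb2
      · have hI : x ∉ dSet I := fun h => (hxmem.1 h).elim hLft hR
        rw [Set.indicator_of_notMem hR, Set.indicator_of_notMem hLft,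
          Set.indicator_of_notMem hI]
        ring
  · have havg : avg I v = (a + b) / dLen I := by
      rw [avg, ← wMass, hsum]; ring
    rw [havg, abs_of_nonneg (by positivity), Real.sqrt_div (by linarith) _,
      ← hsL_def, ← hs_def, div_le_div_iff₀ (by positivity) hsL]
    have h2ab : 2 * (sa * sb) ≤ a + b := by nlinarith [sq_nonneg (sa - sb)]
    nlinarith [mul_le_mul_of_nonneg_right h2ab hsL.le, hssq, mul_pos hspos hsL]
  · have hdelta : deltaAvg v I = 2 * (b - a) / dLen I := by
      unfold deltaAvg avg
      rw [← wMass, ← wMass, ← ha_def, ← hb_def,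
        show dLen (dRight I) = dLen I / 2 from halfLen I,
        show dLen (dLeft I) = dLen I / 2 from halfLen I]
      field_simp
    have havg : avg I v = (a + b) / dLen I := by
      rw [avg, ← wMass, hsum]; ring
    have key : |2 * (b - a) / dLen I| / ((a + b) / dLen I) = 2 * |b - a| / (a + b) := by
      rw [abs_div, abs_of_pos hL, abs_mul, abs_two]
      field_simp
    rw [hdelta, havg, key, abs_div, abs_of_pos (show (0:ℝ) < a + b by linarith)]
    gcongr
    linarith [abs_nonneg (b - a)]
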